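/- For all dA, dB, m, v ≥ 1, define Q_{dA,dB} as the set of (2,m,v) boxes p for which there exist a density matrix ρ : Matrix ((Fin dA) × (Fin dB)) ((Fin dA) × (Fin dB)) ℂ (positive semidefinite with trace 1) and POVMs A : Fin m → Fin v → Matrix (Fin dA) (Fin dA) ℂ and B : Fin m → Fin v → Matrix (Fin dB) (Fin dB) ℂ (each A x a, B y b positive semidefinite, ∑_a A x a = 1, ∑_b B y b = 1) such that the trace of ρ * (A x a ⊗ₖ B y b) equals p x y a b for all x, y, a, b. Then Q_{dA,dB} = Q_{dmin,dmin}, where dmin = min dA dB: the correlations achievable with the asymmetric dimensions (dA, dB) coincide with those achievable when both parties have the minimum dimension. -/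

import Mathlib

open Matrix Kronecker ComplexOrder

/-- Membership in `Q_{dA,dB}`: the box is realizable by a shared quantum state with
(possibly asymmetric) local dimensions `dA` and `dB`, together with local POVMs. -/
def IsQuantumBoxAsym (dA dB m v : ℕ)
    (p : Fin m → Fin m → Fin v → Fin v → ℝ) : Prop :=
  ∃ (ρ : Matrix ((Fin dA) × (Fin dB)) ((Fin dA) × (Fin dB)) ℂ)
    (A : Fin m → Fin v → Matrix (Fin dA) (Fin dA) ℂ)
    (B : Fin m → Fin v → Matrix (Fin dB) (Fin dB) ℂ),
    ρ.PosSemidef ∧ ρ.trace = 1 ∧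
    (∀ x a, (A x a).PosSemidef) ∧ (∀ x, ∑ a, A x a = 1) ∧
    (∀ y b, (B y b).PosSemidef) ∧ (∀ y, ∑ b, B y b = 1) ∧
    ∀ x y a b, (ρ * (A x a ⊗ₖ B y b)).trace = (p x y a b : ℂ)


namespace QBoxAux
set_option linter.unusedSectionVars false
set_option linter.unusedVariables false
set_option maxHeartbeats 1000000

section Helpers
variable {n m : Type*} [Fintype n] [Fintype m] [DecidableEq n] [DecidableEq m]

variable {n m : Type*} [Fintype n] [Fintype m] [DecidableEq n] [DecidableEq m]

lemma psd_diag_nonneg {M : Matrix n n ℂ} (hM : M.PosSemidef) (i : n) : 0 ≤ M i i := by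
  have h := hM.dotProduct_mulVec_nonneg (Pi.single i 1)
  simpa [dotProduct, mulVec, Pi.single_apply, Finset.sum_ite_eq] using h

lemma psd_trace_nonneg {M : Matrix n n ℂ} (hM : M.PosSemidef) : 0 ≤ M.trace :=
  Finset.sum_nonneg fun i _ => psd_diag_nonneg hM i

lemma trace_mul_psd_nonneg {P M : Matrix n n ℂ} (hP : P.PosSemidef) (hM : M.PosSemidef) :
    0 ≤ (P * M).trace := by
  obtain ⟨C, rfl⟩ : ∃ C : Matrix n n ℂ, P = Cᴴ * C := by
    open scoped MatrixOrder in exact CStarAlgebra.nonneg_iff_eq_star_mul_self.mp hP.nonneg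
  rw [Matrix.trace_mul_cycle, Matrix.trace_mul_cycle]
  exact psd_trace_nonneg (hM.mul_mul_conjTranspose_same C)

lemma kron_conjTranspose {l n o q : Type*} (A : Matrix l n ℂ) (B : Matrix o q ℂ) :
    (A ⊗ₖ B)ᴴ = Aᴴ ⊗ₖ Bᴴ := by
  ext ⟨i, j⟩ ⟨k, l⟩
  simp [Matrix.conjTranspose_apply, Matrix.kroneckerMap_apply, mul_comm]

lemma kron_posSemidef {A : Matrix n n ℂ} {B : Matrix m m ℂ}
    (hA : A.PosSemidef) (hB : B.PosSemidef) : (A ⊗ₖ B).PosSemidef := by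
  obtain ⟨C, rfl⟩ : ∃ C : Matrix n n ℂ, A = Cᴴ * C := by
    open scoped MatrixOrder in exact CStarAlgebra.nonneg_iff_eq_star_mul_self.mp hA.nonneg
  obtain ⟨D, rfl⟩ : ∃ D : Matrix m m ℂ, B = Dᴴ * D := by
    open scoped MatrixOrder in exact CStarAlgebra.nonneg_iff_eq_star_mul_self.mp hB.nonneg
  rw [Matrix.mul_kronecker_mul, ← kron_conjTranspose]
  exact Matrix.posSemidef_conjTranspose_mul_self _

lemma psd_col_eq_zero {M : Matrix n n ℂ} (hM : M.PosSemidef) {i : n} (h : M i i = 0) (j : n) :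
    M j i = 0 := by
  have h0 : star (Pi.single i 1 : n → ℂ) ⬝ᵥ M *ᵥ (Pi.single i 1) = 0 := by
    simpa [dotProduct, mulVec, Pi.single_apply, Finset.sum_ite_eq] using h
  have := (hM.dotProduct_mulVec_zero_iff _).mp h0
  have hj := congrFun this j
  simpa [mulVec, Pi.single_apply, Finset.sum_ite_eq] using hj

lemma psd_row_eq_zero {M : Matrix n n ℂ} (hM : M.PosSemidef) {i : n} (h : M i i = 0) (j : n) :
    M i j = 0 := by
  have := psd_col_eq_zero hM h j
  have h2 : star (M j i) = M i j := by
    conv_rhs => rw [← hM.isHermitian]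
    rfl
  rw [← h2, this, star_zero]


end Helpers

variable {dA dB : ℕ}

/-- "steered" operator on Bob's side -/
noncomputable def pt (ρ : Matrix (Fin dA × Fin dB) (Fin dA × Fin dB) ℂ) (M : Matrix (Fin dA) (Fin dA) ℂ) :
    Matrix (Fin dB) (Fin dB) ℂ :=
  Matrix.of fun j j' => ∑ i, ∑ i', ρ (i, j) (i', j') * M i' i

lemma sum4_swap {α β γ δ : Type*} [Fintype α] [Fintype β] [Fintype γ] [Fintype δ]
    (f : α → β → γ → δ → ℂ) :
    ∑ b, ∑ d, ∑ a, ∑ c, f a b c d = ∑ a, ∑ b, ∑ c, ∑ d, f a b c d :=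
  calc ∑ b, ∑ d, ∑ a, ∑ c, f a b c d
      = ∑ b, ∑ a, ∑ d, ∑ c, f a b c d :=
        Finset.sum_congr rfl fun b _ => Finset.sum_comm
    _ = ∑ a, ∑ b, ∑ d, ∑ c, f a b c d := Finset.sum_comm
    _ = ∑ a, ∑ b, ∑ c, ∑ d, f a b c d :=
        Finset.sum_congr rfl fun a _ => Finset.sum_congr rfl fun b _ => Finset.sum_comm

lemma trace_pt_mul (ρ : Matrix (Fin dA × Fin dB) (Fin dA × Fin dB) ℂ)
    (M : Matrix (Fin dA) (Fin dA) ℂ) (N : Matrix (Fin dB) (Fin dB) ℂ) :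
    (pt ρ M * N).trace = (ρ * (M ⊗ₖ N)).trace := by
  simp only [Matrix.trace, Matrix.diag, Matrix.mul_apply, pt, Matrix.of_apply,
    Matrix.kroneckerMap_apply, Fintype.sum_prod_type, Finset.sum_mul]
  rw [sum4_swap]
  exact Finset.sum_congr rfl fun i _ => Finset.sum_congr rfl fun j _ =>
    Finset.sum_congr rfl fun i' _ => Finset.sum_congr rfl fun j' _ => by ring

lemma pt_sum {v : ℕ} (ρ : Matrix (Fin dA × Fin dB) (Fin dA × Fin dB) ℂ)
    (f : Fin v → Matrix (Fin dA) (Fin dA) ℂ) :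
    pt ρ (∑ a, f a) = ∑ a, pt ρ (f a) := by
  ext j j'
  simp only [pt, Matrix.of_apply, Matrix.sum_apply, Finset.mul_sum]
  calc ∑ i, ∑ i', ∑ a, ρ (i, j) (i', j') * f a i' i
      = ∑ i, ∑ a, ∑ i', ρ (i, j) (i', j') * f a i' i :=
        Finset.sum_congr rfl fun i _ => Finset.sum_comm
    _ = ∑ a, ∑ i, ∑ i', ρ (i, j) (i', j') * f a i' i := Finset.sum_comm

lemma trace_pt_one (ρ : Matrix (Fin dA × Fin dB) (Fin dA × Fin dB) ℂ) :
    (pt ρ (1 : Matrix (Fin dA) (Fin dA) ℂ)).trace = ρ.trace := by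
  simp only [Matrix.trace, Matrix.diag, pt, Matrix.of_apply, Matrix.one_apply,
    Fintype.sum_prod_type, mul_ite, mul_one, mul_zero]
  rw [Finset.sum_comm]
  exact Finset.sum_congr rfl fun i _ => Finset.sum_congr rfl fun j _ => by
    rw [Finset.sum_ite_eq' Finset.univ i (fun i' => ρ (i, j) (i', j))]
    simp

lemma pt_posSemidef {ρ : Matrix (Fin dA × Fin dB) (Fin dA × Fin dB) ℂ}
    {M : Matrix (Fin dA) (Fin dA) ℂ} (hρ : ρ.PosSemidef) (hM : M.PosSemidef) :
    (pt ρ M).PosSemidef := by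
  have hρe : ∀ p q, star (ρ q p) = ρ p q := fun p q => by
    conv_rhs => rw [← hρ.isHermitian]
    rfl
  have hMe : ∀ i i', star (M i' i) = M i i' := fun i i' => by
    conv_rhs => rw [← hM.isHermitian]
    rfl
  rw [posSemidef_iff_dotProduct_mulVec]
  constructor
  · ext j j'
    simp only [conjTranspose_apply, pt, Matrix.of_apply, star_sum, star_mul']
    calc ∑ i, ∑ i', star (ρ (i, j') (i', j)) * star (M i' i)
        = ∑ i, ∑ i', ρ (i', j) (i, j') * M i i' := by
          refine Finset.sum_congr rfl fun i _ => Finset.sum_congr rfl fun i' _ => ?_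
          rw [hρe, hMe, mul_comm]
      _ = ∑ i', ∑ i, ρ (i', j) (i, j') * M i i' := Finset.sum_comm
  · intro x
    set W : Matrix (Fin dB) (Fin dB) ℂ := vecMulVec x (star x) with hW
    have hWpsd : W.PosSemidef := by
      rw [hW, vecMulVec_eq (Fin 1)]
      have : (replicateRow (Fin 1) (star x)) = (replicateCol (Fin 1) x)ᴴ := by
        ext i k
        simp
      rw [this]
      exact Matrix.posSemidef_self_mul_conjTranspose _
    have key : star x ⬝ᵥ (pt ρ M) *ᵥ x = ((pt ρ M) * W).trace := by
      simp only [dotProduct, mulVec, Matrix.trace, Matrix.diag, Matrix.mul_apply, hW,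
        vecMulVec_apply, Pi.star_apply, Finset.mul_sum]
      exact Finset.sum_congr rfl fun j _ => Finset.sum_congr rfl fun j' _ => by ring
    rw [key, trace_pt_mul]
    exact trace_mul_psd_nonneg hρ (kron_posSemidef hM hWpsd)


lemma pt_vecMulVec' (s : Fin dB → ℝ) (U : Matrix (Fin dB) (Fin dB) ℂ)
    (M : Matrix (Fin dB) (Fin dB) ℂ) :
    pt (vecMulVec (fun q : Fin dB × Fin dB => (s q.1 : ℂ) * U q.2 q.1)
          (star fun q : Fin dB × Fin dB => (s q.1 : ℂ) * U q.2 q.1)) M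
      = U * (Matrix.diagonal (fun i => (s i : ℂ)) * Mᵀ * Matrix.diagonal (fun i => (s i : ℂ))) * Uᴴ := by
  ext j j'
  have hmid : ∀ i i', (Matrix.diagonal (fun i => (s i : ℂ)) * Mᵀ * Matrix.diagonal (fun i => (s i : ℂ))) i i'
      = (s i : ℂ) * M i' i * (s i' : ℂ) := by
    intro i i'
    rw [Matrix.mul_diagonal, Matrix.diagonal_mul, Matrix.transpose_apply]
  have hR : (U * (Matrix.diagonal (fun i => (s i : ℂ)) * Mᵀ * Matrix.diagonal (fun i => (s i : ℂ))) * Uᴴ) j j'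
      = ∑ i', ∑ i, U j i * ((s i : ℂ) * M i' i * (s i' : ℂ)) * star (U j' i') := by
    simp only [Matrix.mul_apply, Matrix.conjTranspose_apply, hmid, Finset.sum_mul]
  rw [hR]
  simp only [pt, Matrix.of_apply, vecMulVec_apply, Pi.star_apply, star_mul', Complex.star_def,
    Complex.conj_ofReal]
  rw [Finset.sum_comm]
  exact Finset.sum_congr rfl fun i' _ => Finset.sum_congr rfl fun i _ => by ring

lemma diagonal_congr {n : Type*} [DecidableEq n] {f g : n → ℂ}
    (h : ∀ i, f i = g i) : Matrix.diagonal f = Matrix.diagonal g :=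
  congrArg _ (funext h)

lemma assemblage_realization {m v : ℕ} (hm : 1 ≤ m) (hv : 1 ≤ v)
    (σ : Fin m → Fin v → Matrix (Fin dB) (Fin dB) ℂ)
    (hσ : ∀ x a, (σ x a).PosSemidef)
    (R : Matrix (Fin dB) (Fin dB) ℂ)
    (hsum : ∀ x, ∑ a, σ x a = R) :
    ∃ (ρ' : Matrix (Fin dB × Fin dB) (Fin dB × Fin dB) ℂ)
      (A2 : Fin m → Fin v → Matrix (Fin dB) (Fin dB) ℂ),
      ρ'.PosSemidef ∧ ρ'.trace = R.trace ∧
      (∀ x a, (A2 x a).PosSemidef) ∧ (∀ x, ∑ a, A2 x a = 1) ∧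
      ∀ x a, pt ρ' (A2 x a) = σ x a := by
  classical
  have hR : R.PosSemidef := by
    rw [← hsum ⟨0, hm⟩]
    exact Finset.sum_induction _ _ (fun a b ha hb => ha.add hb) Matrix.PosSemidef.zero
      (fun a _ => hσ _ a)
  have hH : R.IsHermitian := hR.isHermitian
  set U : Matrix (Fin dB) (Fin dB) ℂ := (hH.eigenvectorUnitary : Matrix (Fin dB) (Fin dB) ℂ)
    with hUdef
  have hU1 : Uᴴ * U = 1 := by
    rw [hUdef, ← Matrix.star_eq_conjTranspose]
    exact Matrix.mem_unitaryGroup_iff'.mp hH.eigenvectorUnitary.2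
  have hU2 : U * Uᴴ = 1 := by
    rw [hUdef, ← Matrix.star_eq_conjTranspose]
    exact Matrix.mem_unitaryGroup_iff.mp hH.eigenvectorUnitary.2
  set lam : Fin dB → ℝ := hH.eigenvalues with hlamdef
  have hlam : ∀ i, 0 ≤ lam i := fun i => hR.eigenvalues_nonneg i
  set D : Matrix (Fin dB) (Fin dB) ℂ := Matrix.diagonal (fun i => (lam i : ℂ)) with hDdef
  have hspec : R = U * D * Uᴴ := by
    have h := hH.spectral_theorem
    rw [hUdef, hDdef, hlamdef]
    simpa [Matrix.star_eq_conjTranspose, Function.comp_def] using h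
  set s : Fin dB → ℝ := fun i => Real.sqrt (lam i) with hsdef
  have hs2 : ∀ i, (s i : ℂ) * (s i : ℂ) = (lam i : ℂ) := fun i => by
    rw [← Complex.ofReal_mul, Real.mul_self_sqrt (hlam i)]
  have hszero : ∀ i, lam i = 0 → (s i : ℂ) = 0 := fun i h => by
    rw [hsdef]; simp [h]
  have hsne : ∀ i, lam i ≠ 0 → (s i : ℂ) ≠ 0 := fun i h =>
    Complex.ofReal_ne_zero.mpr (ne_of_gt (Real.sqrt_pos.mpr
      (lt_of_le_of_ne (hlam i) (Ne.symm h))))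
  set ψ : Fin dB × Fin dB → ℂ := fun q => (s q.1 : ℂ) * U q.2 q.1 with hψdef
  set ρ' := vecMulVec ψ (star ψ) with hρ'def
  have hρ'psd : ρ'.PosSemidef := by
    rw [hρ'def, vecMulVec_eq (Fin 1)]
    have hrc : replicateRow (Fin 1) (star ψ) = (replicateCol (Fin 1) ψ)ᴴ := by ext i k; simp
    rw [hrc]
    exact Matrix.posSemidef_self_mul_conjTranspose _
  have hUcol : ∀ i, ∑ j, star (U j i) * U j i = 1 := fun i => by
    have h := congrFun (congrFun hU1 i) i
    simpa [Matrix.mul_apply, Matrix.conjTranspose_apply, Matrix.one_apply] using h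
  have hρ'tr : ρ'.trace = R.trace := by
    have h1 : ρ'.trace = ∑ i, ((s i : ℂ) * (s i : ℂ)) * ∑ j, star (U j i) * U j i := by
      simp only [hρ'def, Matrix.trace, Matrix.diag, vecMulVec_apply, Pi.star_apply, hψdef,
        Fintype.sum_prod_type, star_mul', Complex.star_def, Complex.conj_ofReal,
        Finset.mul_sum]
      exact Finset.sum_congr rfl fun i _ => Finset.sum_congr rfl fun j _ => by ring
    have h2 : R.trace = ∑ i, (lam i : ℂ) := by
      rw [hspec, Matrix.trace_mul_cycle, hU1, one_mul, hDdef, Matrix.trace_diagonal]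
    rw [h1, h2]
    exact Finset.sum_congr rfl fun i _ => by rw [hUcol i, mul_one, hs2 i]
  set T : Fin m → Fin v → Matrix (Fin dB) (Fin dB) ℂ := fun x a => Uᴴ * σ x a * U with hTdef
  have hTpsd : ∀ x a, (T x a).PosSemidef := fun x a => (hσ x a).conjTranspose_mul_mul_same U
  have hTsum : ∀ x, ∑ a, T x a = D := fun x => by
    simp only [hTdef]
    rw [← Finset.sum_mul, ← Finset.mul_sum, hsum x, hspec]
    have h : Uᴴ * (U * D * Uᴴ) * U = (Uᴴ * U) * D * (Uᴴ * U) := by noncomm_ring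
    rw [h, hU1, one_mul, mul_one]
  have hTdiag0 : ∀ x a i, lam i = 0 → T x a i i = 0 := by
    intro x a i h0
    have hnn : ∀ b ∈ Finset.univ, (0:ℂ) ≤ T x b i i := fun b _ => psd_diag_nonneg (hTpsd x b) i
    have hsum0 : ∑ b, T x b i i = 0 := by
      have h := congrFun (congrFun (hTsum x) i) i
      simpa [Matrix.sum_apply, hDdef, Matrix.diagonal_apply_eq, h0] using h
    exact (Finset.sum_eq_zero_iff_of_nonneg hnn).mp hsum0 a (Finset.mem_univ a)
  have hT0r : ∀ x a i i', lam i = 0 → T x a i i' = 0 := fun x a i i' h =>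
    psd_row_eq_zero (hTpsd x a) (hTdiag0 x a i h) i'
  have hT0c : ∀ x a i i', lam i' = 0 → T x a i i' = 0 := fun x a i i' h =>
    psd_col_eq_zero (hTpsd x a) (hTdiag0 x a i' h) i
  set g : Fin dB → ℂ := fun i => if lam i = 0 then 0 else ((s i : ℂ))⁻¹ with hgdef
  set G := Matrix.diagonal g with hGdef
  set K := Matrix.diagonal (fun i => if lam i = 0 then (1:ℂ) else 0) with hKdef
  set S := Matrix.diagonal (fun i => (s i : ℂ)) with hSdef
  set a0 : Fin v := ⟨0, hv⟩ with ha0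
  set E : Fin m → Fin v → Matrix (Fin dB) (Fin dB) ℂ :=
    fun x a => G * T x a * G + (if a = a0 then K else 0) with hEdef
  have hGH : Gᴴ = G := by
    rw [hGdef, Matrix.diagonal_conjTranspose]
    refine diagonal_congr fun i => ?_
    rw [hgdef]
    by_cases h0 : lam i = 0 <;>
      simp [h0, Complex.star_def, Complex.conj_ofReal, apply_ite (starRingEnd ℂ)]
  have hSG : S * G = Matrix.diagonal (fun i => if lam i = 0 then (0:ℂ) else 1) := by
    rw [hSdef, hGdef, Matrix.diagonal_mul_diagonal]
    refine diagonal_congr fun i => ?_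
    rw [hgdef]
    by_cases h0 : lam i = 0
    · simp [h0]
    · simp [h0, mul_inv_cancel₀ (hsne i h0)]
  have hGS : G * S = Matrix.diagonal (fun i => if lam i = 0 then (0:ℂ) else 1) := by
    rw [hSdef, hGdef, Matrix.diagonal_mul_diagonal]
    refine diagonal_congr fun i => ?_
    rw [hgdef]
    by_cases h0 : lam i = 0
    · simp [h0]
    · simp [h0, inv_mul_cancel₀ (hsne i h0)]
  have hEpsd : ∀ x a, (E x a).PosSemidef := by
    intro x a
    have h1 : (G * T x a * G).PosSemidef := by
      have h := (hTpsd x a).conjTranspose_mul_mul_same G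
      rwa [hGH] at h
    have h2 : (if a = a0 then K else 0).PosSemidef := by
      split
      · rw [hKdef]
        refine Matrix.PosSemidef.diagonal ?_
        intro i
        dsimp
        split <;> simp
      · exact Matrix.PosSemidef.zero
    exact h1.add h2
  refine ⟨ρ', fun x a => (E x a)ᵀ, hρ'psd, hρ'tr, ?_, ?_, ?_⟩
  · exact fun x a => (hEpsd x a).transpose
  · intro x
    have hsumE : ∑ a, E x a = 1 := by
      simp only [hEdef]
      rw [Finset.sum_add_distrib]
      have hA : ∑ a, G * T x a * G = G * D * G := by
        rw [← Finset.sum_mul, ← Finset.mul_sum, hTsum]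
      have hB : (∑ a, if a = a0 then K else 0) = K := by
        rw [Finset.sum_ite_eq' Finset.univ a0 (fun _ => K)]
        simp
      rw [hA, hB]
      have hGDG : G * D * G = Matrix.diagonal (fun i => g i * (lam i : ℂ) * g i) := by
        rw [hGdef, hDdef, Matrix.diagonal_mul_diagonal, Matrix.diagonal_mul_diagonal]
      rw [hGDG, hKdef, Matrix.diagonal_add, ← Matrix.diagonal_one]
      refine diagonal_congr fun i => ?_
      rw [hgdef]
      by_cases h0 : lam i = 0
      · simp [h0]
      · have hne := hsne i h0
        have hval : (↑(s i))⁻¹ * (lam i : ℂ) * (↑(s i))⁻¹ = 1 := by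
          rw [← hs2 i]
          field_simp
        simp [h0, hval]
    rw [← Matrix.transpose_sum, hsumE, Matrix.transpose_one]
  · intro x a
    have hform := pt_vecMulVec' s U ((E x a)ᵀ)
    rw [← hψdef, ← hρ'def, ← hSdef] at hform
    rw [hform]
    have hSE : S * (E x a)ᵀᵀ * S = T x a := by
      rw [Matrix.transpose_transpose]
      simp only [hEdef]
      rw [Matrix.mul_add, Matrix.add_mul]
      have hK0 : S * (if a = a0 then K else 0) * S = 0 := by
        split
        · rw [hSdef, hKdef, Matrix.diagonal_mul_diagonal, Matrix.diagonal_mul_diagonal,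
            ← Matrix.diagonal_zero]
          refine diagonal_congr fun i => ?_
          by_cases h0 : lam i = 0
          · simp [hszero i h0]
          · simp [h0]
        · simp
      rw [hK0, add_zero]
      have hassoc : S * (G * T x a * G) * S = (S * G) * T x a * (G * S) := by noncomm_ring
      rw [hassoc, hSG, hGS]
      ext i i'
      rw [Matrix.mul_diagonal, Matrix.diagonal_mul]
      by_cases h0 : lam i = 0
      · rw [hT0r x a i i' h0]
        simp
      · by_cases h1 : lam i' = 0
        · rw [hT0c x a i i' h1]
          simp
        · simp [h0, h1]
    rw [hSE]
    simp only [hTdef]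
    have h : U * (Uᴴ * σ x a * U) * Uᴴ = (U * Uᴴ) * σ x a * (U * Uᴴ) := by noncomm_ring
    rw [h, hU2, one_mul, mul_one]


lemma embed_orth {d n : ℕ} (e : Fin d → Fin n) (he : Function.Injective e) :
    (Matrix.of fun i k => if i = e k then (1:ℂ) else 0)ᴴ *
      (Matrix.of fun i k => if i = e k then (1:ℂ) else 0) = 1 := by
  ext k k'
  simp only [Matrix.mul_apply, Matrix.conjTranspose_apply, Matrix.of_apply,
    apply_ite (star : ℂ → ℂ), star_one, star_zero, ite_mul, one_mul, zero_mul]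
  rw [Finset.sum_ite_eq' Finset.univ (e k) (fun i => if i = e k' then (1:ℂ) else 0)]
  simp [Matrix.one_apply, he.eq_iff]

lemma swap_box {dA dB m v : ℕ} {p : Fin m → Fin m → Fin v → Fin v → ℝ}
    (h : IsQuantumBoxAsym dA dB m v p) :
    IsQuantumBoxAsym dB dA m v (fun x y a b => p y x b a) := by
  obtain ⟨ρ, A, B, hρ, hρtr, hA, hAsum, hB, hBsum, htr⟩ := h
  refine ⟨ρ.submatrix Prod.swap Prod.swap, B, A, hρ.submatrix _, ?_, hB, hBsum, hA, hAsum, ?_⟩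
  · rw [← hρtr]
    exact Fintype.sum_equiv (Equiv.prodComm (Fin dB) (Fin dA)) _ _ (fun q => rfl)
  · intro x y a b
    have hk : (B x a ⊗ₖ A y b) = (A y b ⊗ₖ B x a).submatrix Prod.swap Prod.swap := by
      ext q r
      cases q; cases r
      simp only [Matrix.kroneckerMap_apply, Matrix.submatrix_apply, Prod.swap_prod_mk]
      exact mul_comm _ _
    rw [hk]
    have hmul : ρ.submatrix Prod.swap Prod.swap * (A y b ⊗ₖ B x a).submatrix Prod.swap Prod.swap
        = (ρ * (A y b ⊗ₖ B x a)).submatrix Prod.swap Prod.swap := by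
      have h2 := Matrix.submatrix_mul_equiv ρ (A y b ⊗ₖ B x a) Prod.swap
        (Equiv.prodComm (Fin dB) (Fin dA)) Prod.swap
      simpa using h2
    rw [hmul]
    have htr2 : ((ρ * (A y b ⊗ₖ B x a)).submatrix Prod.swap Prod.swap).trace
        = (ρ * (A y b ⊗ₖ B x a)).trace :=
      Fintype.sum_equiv (Equiv.prodComm (Fin dB) (Fin dA)) _ _ (fun q => rfl)
    rw [htr2, htr y x b a]

lemma expand {d dA dB m v : ℕ} (h1 : d ≤ dA) (h2 : d ≤ dB) (hv : 1 ≤ v)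
    {p : Fin m → Fin m → Fin v → Fin v → ℝ}
    (h : IsQuantumBoxAsym d d m v p) : IsQuantumBoxAsym dA dB m v p := by
  classical
  obtain ⟨ρ, A, B, hρ, hρtr, hA, hAsum, hB, hBsum, htr⟩ := h
  set EA : Matrix (Fin dA) (Fin d) ℂ :=
    Matrix.of fun i k => if i = Fin.castLE h1 k then 1 else 0 with hEAdef
  set EB : Matrix (Fin dB) (Fin d) ℂ :=
    Matrix.of fun j l => if j = Fin.castLE h2 l then 1 else 0 with hEBdef
  have hEA1 : EAᴴ * EA = 1 := embed_orth _ (Fin.castLE_injective h1)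
  have hEB1 : EBᴴ * EB = 1 := embed_orth _ (Fin.castLE_injective h2)
  set QA : Matrix (Fin dA) (Fin dA) ℂ := 1 - EA * EAᴴ with hQAdef
  set QB : Matrix (Fin dB) (Fin dB) ℂ := 1 - EB * EBᴴ with hQBdef
  have hPPA : EA * EAᴴ * (EA * EAᴴ) = EA * EAᴴ := by
    rw [Matrix.mul_assoc, ← Matrix.mul_assoc EAᴴ EA EAᴴ, hEA1, Matrix.one_mul]
  have hQAH : QAᴴ = QA := by
    rw [hQAdef, Matrix.conjTranspose_sub, Matrix.conjTranspose_one, Matrix.conjTranspose_mul,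
      Matrix.conjTranspose_conjTranspose]
  have hQAmul : QA * QA = QA := by
    rw [hQAdef, sub_mul, Matrix.one_mul, mul_sub, Matrix.mul_one, hPPA, sub_self, sub_zero]
  have hQA2 : QA = QAᴴ * QA := by rw [hQAH, hQAmul]
  have hPPB : EB * EBᴴ * (EB * EBᴴ) = EB * EBᴴ := by
    rw [Matrix.mul_assoc, ← Matrix.mul_assoc EBᴴ EB EBᴴ, hEB1, Matrix.one_mul]
  have hQBH : QBᴴ = QB := by
    rw [hQBdef, Matrix.conjTranspose_sub, Matrix.conjTranspose_one, Matrix.conjTranspose_mul,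
      Matrix.conjTranspose_conjTranspose]
  have hQBmul : QB * QB = QB := by
    rw [hQBdef, sub_mul, Matrix.one_mul, mul_sub, Matrix.mul_one, hPPB, sub_self, sub_zero]
  have hQB2 : QB = QBᴴ * QB := by rw [hQBH, hQBmul]
  have hQApsd : QA.PosSemidef := by
    rw [hQA2]; exact Matrix.posSemidef_conjTranspose_mul_self _
  have hQBpsd : QB.PosSemidef := by
    rw [hQB2]; exact Matrix.posSemidef_conjTranspose_mul_self _
  set a0 : Fin v := ⟨0, hv⟩ with ha0
  have hE1 : (EA ⊗ₖ EB)ᴴ * (EA ⊗ₖ EB) = 1 := by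
    rw [kron_conjTranspose, ← Matrix.mul_kronecker_mul, hEA1, hEB1,
      Matrix.one_kronecker_one]
  refine ⟨(EA ⊗ₖ EB) * ρ * (EA ⊗ₖ EB)ᴴ,
    fun x a => EA * A x a * EAᴴ + if a = a0 then QA else 0,
    fun y b => EB * B y b * EBᴴ + if b = a0 then QB else 0,
    hρ.mul_mul_conjTranspose_same _, ?_, ?_, ?_, ?_, ?_, ?_⟩
  · rw [Matrix.trace_mul_cycle, hE1, Matrix.one_mul, hρtr]
  · intro x a
    refine ((hA x a).mul_mul_conjTranspose_same EA).add ?_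
    split
    · exact hQApsd
    · exact Matrix.PosSemidef.zero
  · intro x
    rw [Finset.sum_add_distrib]
    have hs : ∑ a, EA * A x a * EAᴴ = EA * (∑ a, A x a) * EAᴴ := by
      rw [← Matrix.sum_mul, ← Matrix.mul_sum]
    rw [hs, hAsum, Finset.sum_ite_eq' Finset.univ a0 (fun _ => QA)]
    simp only [Finset.mem_univ, if_true, Matrix.mul_one, hQAdef]
    abel
  · intro y b
    refine ((hB y b).mul_mul_conjTranspose_same EB).add ?_
    split
    · exact hQBpsd
    · exact Matrix.PosSemidef.zero
  · intro y
    rw [Finset.sum_add_distrib]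
    have hs : ∑ b, EB * B y b * EBᴴ = EB * (∑ b, B y b) * EBᴴ := by
      rw [← Matrix.sum_mul, ← Matrix.mul_sum]
    rw [hs, hBsum, Finset.sum_ite_eq' Finset.univ a0 (fun _ => QB)]
    simp only [Finset.mem_univ, if_true, Matrix.mul_one, hQBdef]
    abel
  · intro x y a b
    have eA : EAᴴ * (EA * A x a * EAᴴ + if a = a0 then QA else 0) * EA = A x a := by
      rw [Matrix.mul_add, Matrix.add_mul]
      have e1 : EAᴴ * (EA * A x a * EAᴴ) * EA = (EAᴴ * EA) * A x a * (EAᴴ * EA) := by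
        simp only [← Matrix.mul_assoc]
      have e2 : EAᴴ * (if a = a0 then QA else 0) * EA = 0 := by
        split
        · rw [hQAdef, Matrix.mul_sub, Matrix.sub_mul, Matrix.mul_one]
          have e3 : EAᴴ * (EA * EAᴴ) * EA = (EAᴴ * EA) * (EAᴴ * EA) := by
            simp only [← Matrix.mul_assoc]
          rw [e3, hEA1, Matrix.one_mul, sub_self]
        · rw [Matrix.mul_zero, Matrix.zero_mul]
      rw [e1, e2, hEA1, Matrix.one_mul, Matrix.mul_one, add_zero]
    have eB : EBᴴ * (EB * B y b * EBᴴ + if b = a0 then QB else 0) * EB = B y b := by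
      rw [Matrix.mul_add, Matrix.add_mul]
      have e1 : EBᴴ * (EB * B y b * EBᴴ) * EB = (EBᴴ * EB) * B y b * (EBᴴ * EB) := by
        simp only [← Matrix.mul_assoc]
      have e2 : EBᴴ * (if b = a0 then QB else 0) * EB = 0 := by
        split
        · rw [hQBdef, Matrix.mul_sub, Matrix.sub_mul, Matrix.mul_one]
          have e3 : EBᴴ * (EB * EBᴴ) * EB = (EBᴴ * EB) * (EBᴴ * EB) := by
            simp only [← Matrix.mul_assoc]
          rw [e3, hEB1, Matrix.one_mul, sub_self]
        · rw [Matrix.mul_zero, Matrix.zero_mul]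
      rw [e1, e2, hEB1, Matrix.one_mul, Matrix.mul_one, add_zero]
    have key : (EA ⊗ₖ EB)ᴴ *
        ((EA * A x a * EAᴴ + if a = a0 then QA else 0) ⊗ₖ
          (EB * B y b * EBᴴ + if b = a0 then QB else 0)) * (EA ⊗ₖ EB)
        = A x a ⊗ₖ B y b := by
      rw [kron_conjTranspose, ← Matrix.mul_kronecker_mul, ← Matrix.mul_kronecker_mul, eA, eB]
    calc ((EA ⊗ₖ EB) * ρ * (EA ⊗ₖ EB)ᴴ *
          ((EA * A x a * EAᴴ + if a = a0 then QA else 0) ⊗ₖ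
            (EB * B y b * EBᴴ + if b = a0 then QB else 0))).trace
        = (ρ * ((EA ⊗ₖ EB)ᴴ *
            ((EA * A x a * EAᴴ + if a = a0 then QA else 0) ⊗ₖ
              (EB * B y b * EBᴴ + if b = a0 then QB else 0)) * (EA ⊗ₖ EB))).trace := by
          rw [Matrix.trace_mul_comm]
          simp only [← Matrix.mul_assoc]
          rw [Matrix.trace_mul_cycle]
          simp only [← Matrix.mul_assoc]
          rw [Matrix.trace_mul_comm]
          simp only [Matrix.mul_assoc]
      _ = (p x y a b : ℂ) := by rw [key, htr]

lemma compress {dA dB m v : ℕ} (hm : 1 ≤ m) (hv : 1 ≤ v)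
    {p : Fin m → Fin m → Fin v → Fin v → ℝ}
    (h : IsQuantumBoxAsym dA dB m v p) : IsQuantumBoxAsym dB dB m v p := by
  obtain ⟨ρ, A, B, hρ, hρtr, hA, hAsum, hB, hBsum, htr⟩ := h
  obtain ⟨ρ', A2, hρ'psd, hρ'tr, hA2psd, hA2sum, hpt⟩ :=
    assemblage_realization hm hv (fun x a => pt ρ (A x a))
      (fun x a => pt_posSemidef hρ (hA x a)) (pt ρ 1)
      (fun x => by rw [← pt_sum, hAsum])
  refine ⟨ρ', A2, B, hρ'psd, ?_, hA2psd, hA2sum, hB, hBsum, ?_⟩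
  · rw [hρ'tr, trace_pt_one, hρtr]
  · intro x y a b
    rw [← trace_pt_mul, hpt x a, trace_pt_mul, htr]

end QBoxAux

/-- asymmetric local dimensions `(dA, dB)` give exactly the same
bipartite correlations as the symmetric minimum dimension `min dA dB`. -/
theorem asym_dims_reduce_to_min (dA dB m v : ℕ)
    (hdA : 1 ≤ dA) (hdB : 1 ≤ dB) (hm : 1 ≤ m) (hv : 1 ≤ v) :
    {p : Fin m → Fin m → Fin v → Fin v → ℝ | IsQuantumBoxAsym dA dB m v p} =
      {p : Fin m → Fin m → Fin v → Fin v → ℝ |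
        IsQuantumBoxAsym (min dA dB) (min dA dB) m v p} := by
  ext p
  simp only [Set.mem_setOf_eq]
  constructor
  · intro h
    rcases le_total dA dB with hle | hle
    · rw [min_eq_left hle]
      exact QBoxAux.swap_box (QBoxAux.compress hm hv (QBoxAux.swap_box h))
    · rw [min_eq_right hle]
      exact QBoxAux.compress hm hv h
  · intro h
    exact QBoxAux.expand (min_le_left _ _) (min_le_right _ _) hv h
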